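/- If t = n, then the chromatic number of the shuriken graph Shu^n_n(G) equals |V(G)| + 1. -/

import Mathlib

open SimpleGraph

/-- The (t,n)-shuriken graph of `G`: vertices are `n` copies of `V(G) ∪ {z}`,
encoded as `Fin n × Option V` (`(i, some x)` is `x_{i+1}`, `(i, none)` is `z_{i+1}`).
Adjacency (symmetrized, loops removed by `fromRel`):
(1) `u_i v_j` whenever `uv ∈ E(G)` (any copies);
(2) all pairs within copy `i` for `i ≤ t` (copy made complete);
(3) all pairs between copy `i` and copy `n+t+1-i` for `t+1 ≤ i ≤ (n+t)/2`
    (0-indexed: `i + j = n + t - 1` with `t ≤ i`). -/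
def shuriken {V : Type*} (G : SimpleGraph V) (n t : ℕ) :
    SimpleGraph (Fin n × Option V) :=
  SimpleGraph.fromRel (fun p q =>
    (∃ x y, p.2 = some x ∧ q.2 = some y ∧ G.Adj x y) ∨
    (p.1 = q.1 ∧ (p.1 : ℕ) < t) ∨
    (t ≤ (p.1 : ℕ) ∧ (p.1 : ℕ) + (q.1 : ℕ) = n + t - 1))

theorem shuriken_chromaticNumber_eq_of_t_eq_n {V : Type*} [Fintype V] (G : SimpleGraph V)
    (n : ℕ) (hn : 1 ≤ n) :
    (shuriken G n n).chromaticNumber = ((Fintype.card V + 1 : ℕ) : ℕ∞) := by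
  classical
  apply le_antisymm
  · -- upper bound: color by second coordinate
    have C : (shuriken G n n).Coloring (Option V) := by
      refine ⟨fun p => p.2, ?_⟩
      intro p q hadj heq
      simp only [shuriken, fromRel_adj] at hadj
      obtain ⟨hne, h⟩ := hadj
      change p.2 = q.2 at heq
      have h1 := p.1.isLt
      have h2 := q.1.isLt
      rcases h with ((⟨x, y, hx, hy, hxy⟩ | ⟨he, -⟩ | ⟨hge, -⟩) |
        (⟨x, y, hx, hy, hxy⟩ | ⟨he, -⟩ | ⟨hge, -⟩))
      · rw [heq, hy] at hx
        exact G.loopless.irrefl y (Option.some_injective _ hx ▸ hxy)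
      · exact hne (Prod.ext he heq)
      · omega
      · rw [← heq, hy] at hx
        exact G.loopless.irrefl y (Option.some_injective _ hx ▸ hxy)
      · exact hne (Prod.ext he.symm heq)
      · omega
    have := C.colorable.chromaticNumber_le
    simpa using this
  · -- lower bound: copy 0 is a clique of size card V + 1
    have hclique : (shuriken G n n).IsClique
        ((Finset.univ.image (fun o : Option V => ((⟨0, hn⟩ : Fin n), o))) : Finset _) := by
      intro p hp q hq hpq
      simp only [Finset.coe_image, Set.mem_image] at hp hq
      obtain ⟨a, -, rfl⟩ := hp
      obtain ⟨b, -, rfl⟩ := hq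
      simp only [shuriken, fromRel_adj]
      refine ⟨hpq, Or.inl (Or.inr (Or.inl ?_))⟩
      simp only [Fin.val_mk, and_true, true_and]
      omega
    have hcard : (Finset.univ.image (fun o : Option V => ((⟨0, hn⟩ : Fin n), o))).card
        = Fintype.card V + 1 := by
      rw [Finset.card_image_of_injective _ (fun a b h => (Prod.mk.injEq _ _ _ _ ▸ h).2)]
      simp
    have := hclique.card_le_chromaticNumber
    rw [hcard] at this
    exact this
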